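/- Let Φ(u) = Σ_{k≥0} Φ_k u^{-k} be a formal power series with gl(2n,ℂ) coefficients satisfying Φ(u)ᵗ = -Φ(-u) and Φ₀ = Q. Then there exists C(u) = 1 + C₁u⁻¹ + C₂u⁻² + ... with gl(2n,ℂ) coefficients such that Φ(u) = C(u)ᵗ Q C(-u). -/

import Mathlib

open Matrix PowerSeries

/-- `gl(2n,ℂ)`, indexed by `Fin 2 × Fin n` (two blocks of size `n`). -/
abbrev GLMat (n : ℕ) := Matrix (Fin 2 × Fin n) (Fin 2 × Fin n) ℂ

/-- The matrix `Q = [[0, Ĩ_n], [-Ĩ_n, 0]]` of the standard symplectic form. -/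
def Qmat (n : ℕ) : GLMat n := fun p q =>
  if p.1 = 0 ∧ q.1 = 1 ∧ (p.2 : ℕ) + (q.2 : ℕ) = n - 1 then 1
  else if p.1 = 1 ∧ q.1 = 0 ∧ (p.2 : ℕ) + (q.2 : ℕ) = n - 1 then -1
  else 0

/-- `A(u) ↦ A(-u)`: replace `u⁻¹` by `-u⁻¹`, i.e. the `M`-th coefficient `A_M`
becomes `(-1)^M A_M`. -/
noncomputable def altern {n : ℕ} (F : PowerSeries (GLMat n)) : PowerSeries (GLMat n) :=
  PowerSeries.mk fun M => (-1 : ℂ) ^ M • PowerSeries.coeff M F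

/-- Coefficientwise transpose of a matrix-valued formal power series. -/
noncomputable def Tser {n : ℕ} (F : PowerSeries (GLMat n)) : PowerSeries (GLMat n) :=
  PowerSeries.mk fun M => (PowerSeries.coeff M F)ᵀ

/-- The pointed gauge group `𝒢` of series with constant term `1`. -/
def pointedGauge (n : ℕ) : Set (PowerSeries (GLMat n)) :=
  {F | PowerSeries.constantCoeff F = 1}

/-- The map `σ : A(u) ↦ Q⁻¹ ((A(-u))ᵗ)⁻¹ Q`. -/
noncomputable def sigmaMap {n : ℕ} (F : PowerSeries (GLMat n)) : PowerSeries (GLMat n) :=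
  PowerSeries.C (Qmat n)⁻¹ * Ring.inverse (Tser (altern F)) * PowerSeries.C (Qmat n)

section Helpers
open Finset
lemma rev_iff {n : ℕ} (i j : Fin n) : (i:ℕ) + (j:ℕ) = n - 1 ↔ j = i.rev := by
  rw [Fin.ext_iff, Fin.val_rev]
  have := i.isLt; have := j.isLt; omega

lemma Qmat_apply {n : ℕ} (a b : Fin 2) (i j : Fin n) :
    Qmat n (a,i) (b,j) = if a = 0 ∧ b = 1 ∧ j = i.rev then 1
      else if a = 1 ∧ b = 0 ∧ j = i.rev then -1 else 0 := by
  simp [Qmat, rev_iff]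

lemma rev_comm {n : ℕ} (i j : Fin n) : (i = j.rev) ↔ (j = i.rev) := by
  constructor <;> (rintro rfl; simp [Fin.rev_rev])

lemma Qt (n : ℕ) : (Qmat n)ᵀ = -(Qmat n) := by
  ext ⟨a,i⟩ ⟨b,j⟩
  simp only [transpose_apply, neg_apply, Qmat_apply]
  fin_cases a <;> fin_cases b <;>
    simp [rev_comm i j, Qmat_apply] <;> split <;> simp

lemma sum_rev {n : ℕ} (k : Fin n) (f : Fin n → ℂ) :
    ∑ x : Fin n, (if k = x.rev then f x else 0) = f k.rev := by
  rw [Finset.sum_eq_single k.rev]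
  · simp [Fin.rev_rev]
  · intro x _ hx; rw [if_neg]; intro h; exact hx (by rw [h, Fin.rev_rev])
  · simp

lemma QQ (n : ℕ) : Qmat n * Qmat n = -1 := by
  ext ⟨a,i⟩ ⟨c,k⟩
  rw [Matrix.mul_apply, Fintype.sum_prod_type, Fin.sum_univ_two]
  simp only [Qmat_apply]
  fin_cases a <;> fin_cases c <;>
    simp [one_apply, Prod.ext_iff, sum_rev, Fin.rev_inj, eq_comm] <;> split <;> simp


noncomputable def Cc {n : ℕ} (Phi : PowerSeries (GLMat n)) : ℕ → GLMat n
  | 0 => 1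
  | (M+1) =>
      ((2:ℂ)⁻¹ * (-1:ℂ)^(M+1)) •
        ((-(Qmat n)) * (PowerSeries.coeff (M+1) Phi -
          ∑ i ∈ (Finset.Ioo 0 (M+1)).attach,
            (-1:ℂ)^((M+1) - i.1) • ((Cc Phi i.1)ᵀ * Qmat n * Cc Phi ((M+1) - i.1))))
  decreasing_by
  · exact (Finset.mem_Ioo.mp i.2).2
  · have := Finset.mem_Ioo.mp i.2; omega

noncomputable def Rr {n : ℕ} (Phi : PowerSeries (GLMat n)) (K : ℕ) : GLMat n :=
  ∑ i ∈ Finset.Ioo 0 K,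
    (-1:ℂ)^(K - i) • ((Cc Phi i)ᵀ * Qmat n * Cc Phi (K - i))

lemma Cc_zero {n : ℕ} (Phi : PowerSeries (GLMat n)) : Cc Phi 0 = 1 := by
  simp [Cc]

lemma Cc_succ {n : ℕ} (Phi : PowerSeries (GLMat n)) (M : ℕ) :
    Cc Phi (M+1) = ((2:ℂ)⁻¹ * (-1:ℂ)^(M+1)) •
      ((-(Qmat n)) * (PowerSeries.coeff (M+1) Phi - Rr Phi (M+1))) := by
  rw [Cc, Rr, Finset.sum_attach (Finset.Ioo 0 (M+1))
    (fun i => (-1:ℂ)^((M+1) - i) • ((Cc Phi i)ᵀ * Qmat n * Cc Phi ((M+1) - i)))]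

lemma negpow_sub {m j : ℕ} (h : j ≤ m) : (-1:ℂ)^(m-j) = (-1)^m * (-1)^j := by
  have h1 : (-1:ℂ)^j * (-1)^j = 1 := by
    rw [← pow_add, ← two_mul, pow_mul]; norm_num
  calc (-1:ℂ)^(m-j) = (-1)^(m-j) * ((-1)^j * (-1)^j) := by rw [h1, mul_one]
    _ = ((-1)^(m-j) * (-1)^j) * (-1)^j := by ring
    _ = (-1)^m * (-1)^j := by rw [← pow_add]; congr 2; omega

lemma Rt {n : ℕ} (Phi : PowerSeries (GLMat n)) (K : ℕ) :
    (Rr Phi (K+1))ᵀ = (-1:ℂ)^K • Rr Phi (K+1) := by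
  rw [Rr, Matrix.transpose_sum, Finset.smul_sum]
  rw [Finset.sum_nbij' (i := fun i => K+1-i) (j := fun i => K+1-i)]
  · intro i hi; simp only [Finset.mem_Ioo] at hi ⊢; omega
  · intro i hi; simp only [Finset.mem_Ioo] at hi ⊢; omega
  · intro i hi; simp only [Finset.mem_Ioo] at hi; omega
  · intro i hi; simp only [Finset.mem_Ioo] at hi; omega
  · intro i hi
    simp only [Finset.mem_Ioo] at hi
    have h1 : K + 1 - (K + 1 - i) = i := by omega
    rw [transpose_smul, transpose_mul, transpose_mul, transpose_transpose, Qt, h1]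
    rw [negpow_sub (by omega : i ≤ K+1)]
    have h2 : (Cc Phi (K+1-i))ᵀ * (-Qmat n * Cc Phi i)
        = -((Cc Phi (K+1-i))ᵀ * Qmat n * Cc Phi i) := by
      rw [Matrix.neg_mul, Matrix.mul_neg, mul_assoc]
    rw [h2, smul_neg, ← neg_smul, smul_smul]
    congr 1
    rw [pow_succ]; ring

theorem coeff_eq (n : ℕ) (Phi : PowerSeries (GLMat n))
    (hskew : ∀ M, (PowerSeries.coeff M Phi)ᵀ = -((-1:ℂ)^M • PowerSeries.coeff M Phi))
    (h0 : PowerSeries.constantCoeff Phi = Qmat n) (M : ℕ) :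
    PowerSeries.coeff M Phi =
      ∑ p ∈ Finset.HasAntidiagonal.antidiagonal M,
        ((Cc Phi p.1)ᵀ * Qmat n) * ((-1:ℂ)^p.2 • Cc Phi p.2) := by
  have hsq : ∀ m : ℕ, (-1:ℂ)^m * (-1)^m = 1 := by
    intro m; rw [← pow_add, ← two_mul, pow_mul]; norm_num
  cases M with
  | zero =>
    simp [Cc_zero, ← h0, PowerSeries.coeff_zero_eq_constantCoeff]
  | succ K =>
    rw [Finset.Nat.sum_antidiagonal_eq_sum_range_succ_mk, Finset.sum_range_succ,
        Finset.range_eq_Ico,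
        ← Finset.add_sum_erase _ _ (by simp : 0 ∈ Finset.Ico 0 (K+1)),
        Finset.Ico_erase_left]
    set X := PowerSeries.coeff (K+1) Phi - Rr Phi (K+1) with hX
    have hXt : Xᵀ = (-1:ℂ)^K • X := by
      rw [hX, transpose_sub, Rt, hskew (K+1), smul_sub]
      congr 1
      rw [← neg_smul]
      congr 1
      rw [pow_succ]; ring
    have hmid : ∑ i ∈ Finset.Ioo 0 (K+1),
        ((Cc Phi i)ᵀ * Qmat n) * ((-1:ℂ)^(K+1-i) • Cc Phi (K+1-i))
        = Rr Phi (K+1) := by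
      rw [Rr]
      exact Finset.sum_congr rfl fun i _ => by rw [mul_smul_comm]
    have hQX : Qmat n * (-Qmat n * X) = X := by
      rw [Matrix.neg_mul, Matrix.mul_neg, ← Matrix.mul_assoc, QQ]
      simp
    have hg0 : ((Cc Phi 0)ᵀ * Qmat n) * ((-1:ℂ)^(K+1-0) • Cc Phi (K+1-0))
        = (2:ℂ)⁻¹ • X := by
      rw [Cc_zero, transpose_one, Matrix.one_mul, Nat.sub_zero, Cc_succ, ← hX,
        mul_smul_comm, mul_smul_comm, smul_smul, hQX]
      congr 1
      calc (-1:ℂ)^(K+1) * ((2:ℂ)⁻¹ * (-1)^(K+1))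
          = (2:ℂ)⁻¹ * ((-1:ℂ)^(K+1) * (-1)^(K+1)) := by ring
        _ = (2:ℂ)⁻¹ := by rw [hsq]; ring
    have hgK : ((Cc Phi (K+1))ᵀ * Qmat n) * ((-1:ℂ)^(K+1-(K+1)) • Cc Phi (K+1-(K+1)))
        = (2:ℂ)⁻¹ • X := by
      rw [Nat.sub_self, pow_zero, Cc_zero, one_smul, Matrix.mul_one, Cc_succ, ← hX,
        transpose_smul, transpose_mul, Matrix.transpose_neg, Qt, neg_neg,
        smul_mul_assoc, Matrix.mul_assoc, hXt]
      rw [smul_mul_assoc, smul_smul, QQ]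
      rw [Matrix.mul_neg, Matrix.mul_one, smul_neg, ← neg_smul]
      congr 1
      calc -((2:ℂ)⁻¹ * (-1)^(K+1) * (-1)^K)
          = (2:ℂ)⁻¹ * ((-1:ℂ)^K * (-1)^K) := by rw [pow_succ]; ring
        _ = (2:ℂ)⁻¹ := by rw [hsq]; ring
    rw [hg0, hmid, hgK, add_right_comm, ← add_smul]
    norm_num
    rw [hX, sub_add_cancel]


end Helpers

/-- if `Φ(u) = Σ Φ_k u^{-k}` has `gl(2n,ℂ)` coefficients and satisfies
`Φ(u)ᵗ = -Φ(-u)` and `Φ₀ = Q`, then there exists `C(u) = 1 + C₁u⁻¹ + ⋯` with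
`Φ(u) = C(u)ᵗ Q C(-u)` (transitivity of the pointed gauge group on skew pairings). -/
theorem gauge_transitive_on_skew_pairings (n : ℕ) (Phi : PowerSeries (GLMat n))
    (hskew : Tser Phi = -(altern Phi))
    (h0 : PowerSeries.constantCoeff Phi = Qmat n) :
    ∃ C : PowerSeries (GLMat n), PowerSeries.constantCoeff C = 1 ∧
      Phi = Tser C * PowerSeries.C (Qmat n) * altern C := by
  refine ⟨PowerSeries.mk (Cc Phi), ?_, ?_⟩
  · rw [← PowerSeries.coeff_zero_eq_constantCoeff_apply, PowerSeries.coeff_mk, Cc_zero]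
  · have hskew' : ∀ M, (PowerSeries.coeff M Phi)ᵀ
        = -((-1:ℂ)^M • PowerSeries.coeff M Phi) := by
      intro M
      have h := congrArg (PowerSeries.coeff M) hskew
      simpa [Tser, altern] using h
    ext M
    rw [coeff_eq n Phi hskew' h0 M, PowerSeries.coeff_mul]
    simp only [PowerSeries.coeff_mul_C, Tser, altern, PowerSeries.coeff_mk]
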